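/- Let Σ = {0,1,…,m−1}, let p = (p_0,…,p_{m−1}) be a probability weight (zero entries allowed), and let ν_p be the associated Bernoulli product measure on Σ^∞. Fix letters θ_0 and θ with p_{θ_0} > 0 and 0 < p_θ < 1. Then for ν_p-almost every y ∈ Σ^∞: limsup_{k→∞} l_{θ_0,θ}(k;y) / (log k / (−log p_θ)) = 1. -/

import Mathlib

open MeasureTheory Metric Set Filter
open scoped ENNReal NNReal

noncomputable section

namespace BMpaper

/-- The plane with the Euclidean metric. -/
abbrev Pt : Type := EuclideanSpace ℝ (Fin 2)

/-- The affine map `S_d (z) = ((z₁+d₁)/n, (z₂+d₂)/m)`. -/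
def Smap (n m : ℕ) (d : ℕ × ℕ) (z : Pt) : Pt :=
  (WithLp.equiv 2 (Fin 2 → ℝ)).symm ![(z 0 + d.1) / n, (z 1 + d.2) / m]

/-- `SIter n m ω k = S_{ω 1} ∘ ⋯ ∘ S_{ω k}` (indices start at `1`). -/
def SIter (n m : ℕ) (ω : ℕ → ℕ × ℕ) : ℕ → Pt → Pt
  | 0 => id
  | k + 1 => SIter n m ω k ∘ Smap n m (ω (k + 1))

/-- The unit square `[0,1]²`. -/
def unitSq : Set Pt := {z | z 0 ∈ Icc (0 : ℝ) 1 ∧ z 1 ∈ Icc (0 : ℝ) 1}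

/-- The fiber sequence: `a_j = #{i : (i,j) ∈ D}`. -/
def fiber (D : Finset (ℕ × ℕ)) (j : ℕ) : ℕ := (D.filter fun d => d.2 = j).card

/-- `E` is the Bedford-McMullen carpet `K(n,m,D)`. -/
def IsBMCarpet (n m : ℕ) (D : Finset (ℕ × ℕ)) (E : Set Pt) : Prop :=
  2 ≤ m ∧ m < n ∧ (∀ d ∈ D, d.1 < n ∧ d.2 < m) ∧ D.Nonempty ∧
    E.Nonempty ∧ IsCompact E ∧ E = ⋃ d ∈ D, Smap n m d '' E

/-- `μ` is the uniform Bernoulli measure of the carpet `E = K(n,m,D)`: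
a Borel probability measure supported on `E` with
`μ = (1/#D) ∑_{d ∈ D} μ ∘ S_d⁻¹`. -/
def IsUnifBernoulli (n m : ℕ) (D : Finset (ℕ × ℕ)) (E : Set Pt) (μ : Measure Pt) : Prop :=
  IsProbabilityMeasure μ ∧ μ Eᶜ = 0 ∧
    ∀ A : Set Pt, MeasurableSet A →
      μ A = (D.card : ℝ≥0∞)⁻¹ * ∑ d ∈ D, μ (Smap n m d ⁻¹' A)

/-- The support of a measure: points all of whose balls have positive measure. -/
def msupport {X : Type*} [PseudoMetricSpace X] [MeasurableSpace X] (μ : Measure X) : Set X :=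
  {x | ∀ r > 0, 0 < μ (ball x r)}

/-- A measure is doubling if `sup_{x ∈ supp μ, r > 0} μ(B_{2r}(x))/μ(B_r(x)) < ∞`. -/
def IsDoubling {X : Type*} [PseudoMetricSpace X] [MeasurableSpace X] (μ : Measure X) : Prop :=
  ∃ C : ℝ≥0∞, C ≠ ⊤ ∧ ∀ x ∈ msupport μ, ∀ r > 0, μ (ball x (2 * r)) ≤ C * μ (ball x r)

/-- `ω ∈ D^∞` (indices from 1) is a coding of `z` if `{z} = ⋂_k S_{ω|k}([0,1]²)`. -/
def IsCoding (n m : ℕ) (D : Finset (ℕ × ℕ)) (ω : ℕ → ℕ × ℕ) (z : Pt) : Prop :=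
  (∀ j, 1 ≤ j → ω j ∈ D) ∧ (⋂ k ≥ 1, SIter n m ω k '' unitSq) = {z}

/-- The set `V_E` of points having two codings with different vertical components. -/
def VSet (n m : ℕ) (D : Finset (ℕ × ℕ)) (E : Set Pt) : Set Pt :=
  {z | z ∈ E ∧ ∃ ω ω' : ℕ → ℕ × ℕ, IsCoding n m D ω z ∧ IsCoding n m D ω' z ∧
    ∃ j, 1 ≤ j ∧ (ω j).2 ≠ (ω' j).2}

/-- A gauge function: strictly decreasing and positive on `(0,1)`, tending to `∞` at `0⁺`. -/
structure IsGauge (φ : ℝ → ℝ) : Prop where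
  pos : ∀ r ∈ Ioo (0 : ℝ) 1, 0 < φ r
  anti : StrictAntiOn φ (Ioo (0 : ℝ) 1)
  tendsto_top : Tendsto φ (nhdsWithin 0 (Ioi 0)) atTop

/-- The upper doubling index `δ̄_φ(z; μ, ρ)`. -/
def upperIndex {X : Type*} [PseudoMetricSpace X] [MeasurableSpace X]
    (μ : Measure X) (φ : ℝ → ℝ) (ρ : ℝ) (z : X) : EReal :=
  limsup (fun r : ℝ =>
    ⨆ z' ∈ {w | w ∈ msupport μ ∧ ball w (ρ * r) ⊆ ball z r},
      ((Real.log ((μ (ball z r)).toReal / (μ (ball z' (ρ * r))).toReal) / φ r : ℝ) : EReal))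
    (nhdsWithin 0 (Ioi 0))

/-- The lower doubling index `δ_φ(z; μ, ρ)` (with `liminf`). -/
def lowerIndex {X : Type*} [PseudoMetricSpace X] [MeasurableSpace X]
    (μ : Measure X) (φ : ℝ → ℝ) (ρ : ℝ) (z : X) : EReal :=
  liminf (fun r : ℝ =>
    ⨆ z' ∈ {w | w ∈ msupport μ ∧ ball w (ρ * r) ⊆ ball z r},
      ((Real.log ((μ (ball z r)).toReal / (μ (ball z' (ρ * r))).toReal) / φ r : ℝ) : EReal))
    (nhdsWithin 0 (Ioi 0))

/-- `σ = log m / log n`. -/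
def sigma (n m : ℕ) : ℝ := Real.log m / Real.log n

/-- `ℓ(k) = ⌊k/σ⌋`. -/
def ell (n m : ℕ) (k : ℕ) : ℕ := ⌊(k : ℝ) / sigma n m⌋₊

/-- `Ω_j`: sequences whose vertical component ends with `j^∞`. -/
def OmegaSet (j : ℕ) : Set (ℕ → ℕ × ℕ) := {ω | ∃ K, ∀ h, K ≤ h → (ω h).2 = j}

/-- `h_p(k; ω)`: the largest `h ≤ ℓ(k)` with `y_h ≠ p` (and `0` if there is none). -/
def hIdx (n m : ℕ) (p : ℕ) (ω : ℕ → ℕ × ℕ) (k : ℕ) : ℕ :=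
  WithBot.unbotD 0 ((Finset.Icc 1 (ell n m k)).filter fun h => (ω h).2 ≠ p).max

/-- `β_0(k; ω)`. -/
def beta0 (n m : ℕ) (D : Finset (ℕ × ℕ)) (ω : ℕ → ℕ × ℕ) (k : ℕ) : ℕ :=
  if 1 ≤ hIdx n m 0 ω k ∧ 0 < fiber D ((ω (hIdx n m 0 ω k)).2 - 1) then
    ell n m k - max k (hIdx n m 0 ω k)
  else 0

/-- `β_{m-1}(k; ω)`. -/
def betaTop (n m : ℕ) (D : Finset (ℕ × ℕ)) (ω : ℕ → ℕ × ℕ) (k : ℕ) : ℕ :=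
  if 1 ≤ hIdx n m (m - 1) ω k ∧ 0 < fiber D ((ω (hIdx n m (m - 1) ω k)).2 + 1) then
    ell n m k - max k (hIdx n m (m - 1) ω k)
  else 0

/-- The reverse run length function `β(k; ω) = max (β_0(k;ω), β_{m-1}(k;ω))`. -/
def beta (n m : ℕ) (D : Finset (ℕ × ℕ)) (ω : ℕ → ℕ × ℕ) (k : ℕ) : ℕ :=
  max (beta0 n m D ω k) (betaTop n m D ω k)

/-- The approximate square `Q_k(ω)` of rank `k`: the `π`-image of the set of sequences
agreeing with `ω` horizontally up to `k` and vertically up to `ℓ(k)`. -/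
def approxSq (n m : ℕ) (D : Finset (ℕ × ℕ)) (ω : ℕ → ℕ × ℕ) (k : ℕ) : Set Pt :=
  {z | ∃ ω' : ℕ → ℕ × ℕ, IsCoding n m D ω' z ∧
    (∀ i, 1 ≤ i → i ≤ k → (ω' i).1 = (ω i).1) ∧
    (∀ i, 1 ≤ i → i ≤ ell n m k → (ω' i).2 = (ω i).2)}

/-- `U(z; r, ρ) = sup { μ(B_r(z))/μ(B_{ρr}(z')) : z' ∈ E, B_{ρr}(z') ⊆ B_r(z) }`. -/
def Ufun (μ : Measure Pt) (E : Set Pt) (ρ : ℝ) (z : Pt) (r : ℝ) : ℝ≥0∞ :=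
  ⨆ z' ∈ {w | w ∈ E ∧ ball w (ρ * r) ⊆ ball z r}, μ (ball z r) / μ (ball z' (ρ * r))

/-- `Ξ_k(z)` (w.r.t. radius `r`): approximate squares of rank `k` meeting `B_r(z)`. -/
def Xi (n m : ℕ) (D : Finset (ℕ × ℕ)) (k : ℕ) (z : Pt) (r : ℝ) : Set (Set Pt) :=
  {Q | ∃ ω : ℕ → ℕ × ℕ, (∀ j, 1 ≤ j → ω j ∈ D) ∧ Q = approxSq n m D ω k ∧
    (Q ∩ ball z r).Nonempty}

/-- `f` is bi-Lipschitz on `E` with constant `C`. -/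
def BiLipOn (f : Pt → Pt) (E : Set Pt) (C : ℝ) : Prop :=
  ∀ x ∈ E, ∀ y ∈ E,
    C⁻¹ * dist x y ≤ dist (f x) (f y) ∧ dist (f x) (f y) ≤ C * dist x y

/-- `E` and `F` are Lipschitz equivalent. -/
def LipEquiv (E F : Set Pt) : Prop :=
  ∃ (f : Pt → Pt) (C : ℝ), 0 < C ∧ Set.BijOn f E F ∧ BiLipOn f E C

/-- The modified run length `l_{θ₀,θ}(k; y)`. -/
def runLenMod (θ0 θ : ℕ) (y : ℕ → ℕ) (k : ℕ) : ℕ :=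
  if y (k - 1) = θ0 then sInf {t | y (k + t) ≠ θ} else 0

/-- The upper index `γ̄(z; μ, ρ)`. -/
def gammaUpper {X : Type*} [PseudoMetricSpace X] [MeasurableSpace X]
    (μ : Measure X) (ρ : ℝ) (z : X) : EReal :=
  limsup (fun r : ℝ =>
    ⨆ z' ∈ {w | w ∈ msupport μ ∧ ball w (ρ * r) ⊆ ball z r},
      ((Real.log (μ (ball z' (ρ * r))).toReal / Real.log (μ (ball z r)).toReal : ℝ) : EReal))
    (nhdsWithin 0 (Ioi 0))

/-- The lower index `γ(z; μ, ρ)` (with `liminf`). -/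
def gammaLower {X : Type*} [PseudoMetricSpace X] [MeasurableSpace X]
    (μ : Measure X) (ρ : ℝ) (z : X) : EReal :=
  liminf (fun r : ℝ =>
    ⨆ z' ∈ {w | w ∈ msupport μ ∧ ball w (ρ * r) ⊆ ball z r},
      ((Real.log (μ (ball z' (ρ * r))).toReal / Real.log (μ (ball z r)).toReal : ℝ) : EReal))
    (nhdsWithin 0 (Ioi 0))

end BMpaper

namespace BMpaper
lemma cylinder_measurableSet (F : Finset ℕ) (c : ℕ → ℕ) :
    MeasurableSet {y : ℕ → ℕ | ∀ j ∈ F, y j = c j} := by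
  have h : {y : ℕ → ℕ | ∀ j ∈ F, y j = c j}
      = ⋂ j ∈ (F : Set ℕ), (fun y : ℕ → ℕ => y j) ⁻¹' {c j} := by
    ext y; simp
  rw [h]
  exact MeasurableSet.biInter F.countable_toSet fun j _ =>
    (measurable_pi_apply j) (measurableSet_singleton _)

def kseq (s : ℕ → ℕ) : ℕ → ℕ
  | 0 => 2
  | i + 1 => kseq s i + s (kseq s i) + 2

lemma kseq_succ (s : ℕ → ℕ) (i : ℕ) : kseq s (i + 1) = kseq s i + s (kseq s i) + 2 := rfl

lemma kseq_ge (s : ℕ → ℕ) : ∀ i, i + 2 ≤ kseq s i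
  | 0 => le_refl _
  | i + 1 => by have := kseq_ge s i; rw [kseq_succ]; omega

lemma kseq_strictMono (s : ℕ → ℕ) : StrictMono (kseq s) :=
  strictMono_nat_of_lt_succ fun i => by rw [kseq_succ]; omega

lemma kseq_between (s : ℕ → ℕ) {i j : ℕ} (h1 : kseq s i < kseq s j)
    (h2 : kseq s j < kseq s (i + 1)) : False := by
  have hij : i < j := (kseq_strictMono s).lt_iff_lt.1 h1
  have hji : j < i + 1 := (kseq_strictMono s).lt_iff_lt.1 h2
  omega

set_option maxHeartbeats 2000000 in
/-- **Lemma 5.3.** Law of the iterated modified run length for a Bernoulli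
measure on `Σ^∞`, `Σ = {0, …, m-1}`. -/
theorem modified_run_length_ae
    (m : ℕ) (hm : 2 ≤ m) (p : ℕ → ℝ) (hp : ∀ j, 0 ≤ p j)
    (hsum : ∑ j ∈ Finset.range m, p j = 1) (hout : ∀ j, m ≤ j → p j = 0)
    (ν : Measure (ℕ → ℕ)) (hν : IsProbabilityMeasure ν)
    (hcyl : ∀ s : Finset ℕ, ∀ c : ℕ → ℕ,
      ν {y | ∀ i ∈ s, y i = c i} = ∏ i ∈ s, ENNReal.ofReal (p (c i)))
    (θ0 θ : ℕ) (hθ0 : 0 < p θ0) (hθpos : 0 < p θ) (hθlt : p θ < 1) :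
    ∀ᵐ y ∂ν,
      limsup (fun k : ℕ =>
        (((runLenMod θ0 θ y k : ℝ) / (Real.log k / (-Real.log (p θ))) : ℝ) : EReal))
        atTop = 1 := by
  classical
  set L : ℝ := -Real.log (p θ) with hLdef
  clear_value L
  have hθm : θ < m := by
    by_contra h
    push_neg at h
    rw [hout θ h] at hθpos
    exact lt_irrefl 0 hθpos
  have hlogq : Real.log (p θ) < 0 := Real.log_neg hθpos hθlt
  have hL : 0 < L := by rw [hLdef]; linarith
  have hlogL : Real.log (p θ) = -L := by rw [hLdef]; ring
  obtain ⟨θ1, hθ1θ, hθ1pos⟩ : ∃ j, j ≠ θ ∧ 0 < p j := by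
    by_contra h
    push_neg at h
    have h2 : ∑ j ∈ Finset.range m, p j = p θ :=
      Finset.sum_eq_single_of_mem θ (Finset.mem_range.2 hθm)
        (fun j _ hj => le_antisymm (h j hj) (hp j))
    rw [h2] at hsum
    linarith
  -- Upper bound
  have keyU : ∀ n : ℕ, ∀ᵐ y ∂ν, Filter.limsup
      (fun k : ℕ => (((runLenMod θ0 θ y k : ℝ) / (Real.log k / L) : ℝ) : EReal)) atTop
      ≤ ((1 + 1 / ((n : ℝ) + 1) : ℝ) : EReal) := by
    intro n
    set ε : ℝ := 1 / ((n : ℝ) + 1) with hεdef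
    have hε0 : 0 < ε := by positivity
    set t : ℕ → ℕ := fun k => ⌈(1 + ε) * (Real.log k / L)⌉₊ with htdef
    set B : ℕ → Set (ℕ → ℕ) := fun k => {y : ℕ → ℕ | ∀ j ∈ Finset.Ico k (k + t k), y j = θ}
      with hBdef
    have hνB : ∀ k, ν (B k) = ENNReal.ofReal (p θ) ^ t k := by
      intro k
      have h := hcyl (Finset.Ico k (k + t k)) (fun _ => θ)
      simp only [hBdef]
      rw [h, Finset.prod_const, Nat.card_Ico]
      congr 1
      omega
    have hsummable : (∑' k, ν (B k)) ≠ ⊤ := by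
      set g : ℕ → ℝ := fun k => if k < 2 then 1 else (k : ℝ) ^ (-(1 + ε)) with hgdef
      have hgnn : ∀ k, 0 ≤ g k := by
        intro k
        simp only [hgdef]
        split
        · norm_num
        · positivity
      have hgsum : Summable g := by
        have h1 : Summable (fun k : ℕ => (k : ℝ) ^ (-(1 + ε))) :=
          Real.summable_nat_rpow.2 (by linarith)
        have h2 : Summable (fun k : ℕ => ((k + 2 : ℕ) : ℝ) ^ (-(1 + ε))) :=
          (_root_.summable_nat_add_iff 2).2 h1
        refine (_root_.summable_nat_add_iff 2).1 (h2.congr fun k => ?_)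
        simp only [hgdef]
        rw [if_neg (by omega)]
      have hbound : ∀ k, ν (B k) ≤ ENNReal.ofReal (g k) := by
        intro k
        by_cases hk : k < 2
        · simp only [hgdef, if_pos hk, ENNReal.ofReal_one]
          exact prob_le_one
        · push_neg at hk
          have hk0 : (0 : ℝ) < k := by exact_mod_cast (by omega : 0 < k)
          have hk1 : (1 : ℝ) < k := by exact_mod_cast (by omega : 1 < k)
          have hlognn : 0 ≤ Real.log k := Real.log_nonneg hk1.le
          have hceil : ((1 + ε) * (Real.log k / L)) ≤ (t k : ℝ) := Nat.le_ceil _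
          have hq1 : (p θ) ^ (t k) ≤ (k : ℝ) ^ (-(1 + ε)) := by
            have e1 : (p θ) ^ (t k) = (p θ) ^ ((t k : ℕ) : ℝ) := (Real.rpow_natCast _ _).symm
            rw [e1]
            have e2 : (p θ) ^ ((t k : ℕ) : ℝ) ≤ (p θ) ^ ((1 + ε) * (Real.log k / L)) :=
              Real.rpow_le_rpow_of_exponent_ge hθpos hθlt.le hceil
            refine e2.trans (le_of_eq ?_)
            rw [Real.rpow_def_of_pos hθpos, Real.rpow_def_of_pos hk0]
            congr 1
            rw [hlogL]
            field_simp
          rw [hνB k, ← ENNReal.ofReal_pow (hp θ)]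
          simp only [hgdef, if_neg (by omega : ¬ k < 2)]
          exact ENNReal.ofReal_le_ofReal hq1
      have hle : (∑' k, ν (B k)) ≤ ENNReal.ofReal (∑' k, g k) := by
        rw [ENNReal.ofReal_tsum_of_nonneg hgnn hgsum]
        exact ENNReal.tsum_le_tsum hbound
      exact ne_top_of_le_ne_top ENNReal.ofReal_ne_top hle
    filter_upwards [ae_eventually_notMem hsummable] with y hy
    refine Filter.limsup_le_of_le (by isBoundedDefault) ?_
    filter_upwards [hy, eventually_ge_atTop 2] with k hk h2k
    have hk1 : (1 : ℝ) < k := by exact_mod_cast (by omega : 1 < k)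
    have hlognn : 0 ≤ Real.log k := Real.log_nonneg hk1.le
    have hc : 0 < Real.log k / L := div_pos (Real.log_pos hk1) hL
    simp only [hBdef, Set.mem_setOf_eq] at hk
    push_neg at hk
    obtain ⟨j, hjmem, hjne⟩ := hk
    rw [Finset.mem_Ico] at hjmem
    have hjS : (j - k) ∈ {t | y (k + t) ≠ θ} := by
      have hkj : k + (j - k) = j := by omega
      simp only [Set.mem_setOf_eq, hkj]
      exact hjne
    have hsInf : sInf {t | y (k + t) ≠ θ} ≤ j - k := Nat.sInf_le hjS
    have hjk : j - k < t k := by omega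
    have hrun : runLenMod θ0 θ y k < t k := by
      rw [runLenMod]
      split
      · omega
      · omega
    have hceil2 : (t k : ℝ) < (1 + ε) * (Real.log k / L) + 1 := by
      apply Nat.ceil_lt_add_one
      positivity
    have hrunR : (runLenMod θ0 θ y k : ℝ) ≤ (1 + ε) * (Real.log k / L) := by
      have hcast : (runLenMod θ0 θ y k : ℝ) + 1 ≤ (t k : ℝ) := by exact_mod_cast hrun
      linarith
    rw [EReal.coe_le_coe_iff, div_le_iff₀ hc]
    exact hrunR
  -- Lower bound
  have keyL : ∀ n : ℕ, ∀ᵐ y ∂ν, ((1 - 1 / ((n : ℝ) + 1) : ℝ) : EReal) ≤ Filter.limsup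
      (fun k : ℕ => (((runLenMod θ0 θ y k : ℝ) / (Real.log k / L) : ℝ) : EReal)) atTop := by
    intro n
    obtain ⟨ε, hεdef⟩ : ∃ e : ℝ, e = 1 / ((n : ℝ) + 1) := ⟨_, rfl⟩
    have hε0 : 0 < ε := by rw [hεdef]; positivity
    have hε1 : ε ≤ 1 := by
      rw [hεdef, div_le_one (by positivity)]
      have := Nat.cast_nonneg (α := ℝ) n
      linarith
    obtain ⟨sl, hsldef⟩ : ∃ f : ℕ → ℕ, f = fun k : ℕ => ⌈(1 - ε) * (Real.log k / L)⌉₊ := ⟨_, rfl⟩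
    obtain ⟨K, hKdef⟩ : ∃ f : ℕ → ℕ, f = kseq sl := ⟨_, rfl⟩
    have hKi : ∀ i, i + 2 ≤ K i := by rw [hKdef]; exact kseq_ge sl
    have hK2 : ∀ i, 2 ≤ K i := fun i => le_trans (by omega) (hKi i)
    have hKsucc : ∀ i, K (i + 1) = K i + sl (K i) + 2 := by rw [hKdef]; exact kseq_succ sl
    have hKmono : StrictMono K := by rw [hKdef]; exact kseq_strictMono sl
    have hbet : ∀ i j, K i < K j → K j < K (i + 1) → False := by
      rw [hKdef]; exact fun i j h1 h2 => kseq_between sl h1 h2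
    obtain ⟨cl, hcldef⟩ : ∃ f : ℕ → ℕ, f = fun j =>
        if ∃ i, j + 1 = K i then θ0 else if ∃ i, j = K i + sl (K i) then θ1 else θ := ⟨_, rfl⟩
    obtain ⟨F, hFdef⟩ : ∃ f : ℕ → Finset ℕ,
        f = fun i => Finset.Icc (K i - 1) (K i + sl (K i)) := ⟨_, rfl⟩
    obtain ⟨A, hAdef⟩ : ∃ f : ℕ → Set (ℕ → ℕ),
        f = fun i => {y : ℕ → ℕ | ∀ j ∈ F i, y j = cl j} := ⟨_, rfl⟩
    have hnotK : ∀ i t, t ≤ sl (K i) → ¬ ∃ i', K i + t + 1 = K i' := by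
      rintro i t ht ⟨i', hi'⟩
      refine hbet i i' (by omega) ?_
      rw [hKsucc i]; omega
    have hnotE : ∀ i t, t < sl (K i) → ¬ ∃ i', K i + t = K i' + sl (K i') := by
      rintro i t ht ⟨i', hi'⟩
      refine hbet i (i' + 1) ?_ ?_
      · rw [hKsucc i']; omega
      · rw [hKsucc i', hKsucc i]; omega
    have hcl0 : ∀ i, cl (K i - 1) = θ0 := by
      intro i
      have h2 := hK2 i
      simp only [hcldef]
      rw [if_pos ⟨i, by omega⟩]
    have hclθ : ∀ i t, t < sl (K i) → cl (K i + t) = θ := by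
      intro i t ht
      simp only [hcldef]
      rw [if_neg (hnotK i t ht.le), if_neg (hnotE i t ht)]
    have hcl1 : ∀ i, cl (K i + sl (K i)) = θ1 := by
      intro i
      simp only [hcldef]
      rw [if_neg (hnotK i (sl (K i)) le_rfl), if_pos ⟨i, rfl⟩]
    have hνA : ∀ i, ν (A i) =
        ENNReal.ofReal (p θ0) * ENNReal.ofReal (p θ) ^ (sl (K i)) * ENNReal.ofReal (p θ1) := by
      intro i
      have h2 := hK2 i
      have hsetEq : F i = insert (K i - 1)
          (insert (K i + sl (K i)) (Finset.Ico (K i) (K i + sl (K i)))) := by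
        simp only [hFdef]
        ext j
        simp only [Finset.mem_Icc, Finset.mem_insert, Finset.mem_Ico]
        omega
      simp only [hAdef]
      rw [hcyl (F i) cl, hsetEq,
        Finset.prod_insert (by simp only [Finset.mem_insert, Finset.mem_Ico]; omega),
        Finset.prod_insert (by simp only [Finset.mem_Ico]; omega)]
      have hprod : ∏ j ∈ Finset.Ico (K i) (K i + sl (K i)), ENNReal.ofReal (p (cl j))
          = ENNReal.ofReal (p θ) ^ sl (K i) := by
        have hc : ∀ j ∈ Finset.Ico (K i) (K i + sl (K i)),
            ENNReal.ofReal (p (cl j)) = ENNReal.ofReal (p θ) := by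
          intro j hj
          rw [Finset.mem_Ico] at hj
          have hjj : j = K i + (j - K i) := by omega
          rw [hjj, hclθ i (j - K i) (by omega)]
        rw [Finset.prod_congr rfl hc, Finset.prod_const, Nat.card_Ico]
        congr 1
        omega
      rw [hprod, hcl0 i, hcl1 i]
      ring
    have hAmeas : ∀ i, MeasurableSet (A i) := by
      intro i
      simp only [hAdef]
      exact cylinder_measurableSet (F i) cl
    have hdisj : ∀ i1 i2 : ℕ, i1 ≠ i2 → Disjoint (F i1) (F i2) := by
      have key : ∀ i1 i2 : ℕ, i1 < i2 → Disjoint (F i1) (F i2) := by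
        intro i1 i2 h12
        rw [Finset.disjoint_left]
        intro x hx1 hx2
        simp only [hFdef, Finset.mem_Icc] at hx1 hx2
        have hle : K (i1 + 1) ≤ K i2 := hKmono.monotone h12
        have hs1 := hKsucc i1
        have h22 := hK2 i2
        omega
      intro i1 i2 h
      rcases lt_or_gt_of_ne h with h' | h'
      · exact key _ _ h'
      · exact (key _ _ h').symm
    have hindep : ProbabilityTheory.iIndepSet A ν := by
      rw [ProbabilityTheory.iIndepSet_iff_meas_biInter hAmeas]
      intro T
      have hInter : (⋂ i ∈ T, A i) = {y : ℕ → ℕ | ∀ j ∈ T.biUnion F, y j = cl j} := by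
        ext y
        simp only [Set.mem_iInter, hAdef, Set.mem_setOf_eq, Finset.mem_biUnion]
        constructor
        · rintro h j ⟨i, hi, hj⟩
          exact h i hi j hj
        · intro h i hi j hj
          exact h j ⟨i, hi, hj⟩
      rw [hInter, hcyl, Finset.prod_biUnion (fun i1 _ i2 _ h => hdisj i1 i2 h)]
      refine Finset.prod_congr rfl fun i _ => ?_
      simp only [hAdef]
      exact (hcyl (F i) cl).symm
    obtain ⟨Cr, hCrdef⟩ : ∃ c : ℝ, c = p θ0 * p θ1 * p θ := ⟨_, rfl⟩
    have hCr0 : 0 < Cr := by rw [hCrdef]; exact mul_pos (mul_pos hθ0 hθ1pos) hθpos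
    obtain ⟨a, hadef⟩ : ∃ a : ℝ, a = 1 - ε / 2 := ⟨_, rfl⟩
    have ha0 : 0 < a := by rw [hadef]; linarith
    have ha1 : a < 1 := by rw [hadef]; linarith
    have hev : ∀ᶠ k : ℕ in atTop, ((sl k : ℝ) + 2) ≤ (k : ℝ) ^ (ε / 2) := by
      have htend : Tendsto (fun k : ℕ => (k : ℝ) ^ (ε / 4)) atTop atTop :=
        (tendsto_rpow_atTop (by positivity : (0:ℝ) < ε/4)).comp tendsto_natCast_atTop_atTop
      filter_upwards [htend.eventually_ge_atTop (4 / (ε * L) + 4), eventually_ge_atTop 1]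
        with k hk hk1
      have hk0 : (0 : ℝ) < k := by exact_mod_cast (by omega : 0 < k)
      have hk1' : (1 : ℝ) ≤ k := by exact_mod_cast hk1
      have hlog0 : 0 ≤ Real.log k := Real.log_nonneg hk1'
      have hrp1 : (1 : ℝ) ≤ (k : ℝ) ^ (ε / 4) := Real.one_le_rpow hk1' (by positivity)
      have hslk : (sl k : ℝ) < (1 - ε) * (Real.log k / L) + 1 := by
        rw [hsldef]
        apply Nat.ceil_lt_add_one
        have h1ε : 0 ≤ 1 - ε := by linarith
        exact mul_nonneg h1ε (div_nonneg hlog0 hL.le)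
      have h1 : (sl k : ℝ) + 2 ≤ Real.log k / L + 3 := by
        have hc0 : 0 ≤ Real.log k / L := div_nonneg hlog0 hL.le
        nlinarith
      have hlog : Real.log k ≤ (k : ℝ) ^ (ε / 4) / (ε / 4) :=
        Real.log_le_rpow_div hk0.le (by positivity)
      have e1 : Real.log k / L ≤ 4 / (ε * L) * (k : ℝ) ^ (ε / 4) := by
        rw [div_le_iff₀ hL]
        have hεne : ε ≠ 0 := ne_of_gt hε0
        have hLne : L ≠ 0 := ne_of_gt hL
        have e2 : 4 / (ε * L) * (k : ℝ) ^ (ε / 4) * L = (k : ℝ) ^ (ε / 4) / (ε / 4) := by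
          field_simp
        rw [e2]
        exact hlog
      have h3 : (4 / (ε * L) + 4) * (k : ℝ) ^ (ε / 4) ≤ (k : ℝ) ^ (ε / 2) := by
        have e3 : (k : ℝ) ^ (ε / 2) = (k : ℝ) ^ (ε / 4) * (k : ℝ) ^ (ε / 4) := by
          rw [← Real.rpow_add hk0]
          congr 1
          ring
        rw [e3]
        exact mul_le_mul_of_nonneg_right hk (by positivity)
      have h4 : (4 / (ε * L) + 4) * (k : ℝ) ^ (ε / 4)
          = 4 / (ε * L) * (k : ℝ) ^ (ε / 4) + 4 * (k : ℝ) ^ (ε / 4) := by ring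
      linarith
    obtain ⟨I0, hKb⟩ := eventually_atTop.1 hev
    have hKI0 : ∀ i, I0 ≤ i → I0 ≤ K i := fun i hi => hi.trans ((by omega : i ≤ i + 2).trans (hKi i))
    have hterm : ∀ i, I0 ≤ i →
        ENNReal.ofReal (Cr * ∑ j ∈ Finset.Ico (K i) (K (i + 1)), (j : ℝ) ^ (-a)) ≤ ν (A i) := by
      intro i hi
      have h2 := hK2 i
      have hk0 : (0 : ℝ) < K i := by exact_mod_cast (by omega : 0 < K i)
      have hk1 : (1 : ℝ) < K i := by exact_mod_cast (by omega : 1 < K i)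
      have hlognn : 0 ≤ Real.log (K i) := Real.log_nonneg hk1.le
      rw [hνA i, ← ENNReal.ofReal_pow (hp θ), ← ENNReal.ofReal_mul (hp θ0),
        ← ENNReal.ofReal_mul (by positivity)]
      apply ENNReal.ofReal_le_ofReal
      set s : ℕ := sl (K i) with hsdef
      -- (1) sum bound
      have hSumB : (∑ j ∈ Finset.Ico (K i) (K (i + 1)), (j : ℝ) ^ (-a))
          ≤ ((s : ℝ) + 2) * (K i : ℝ) ^ (-a) := by
        have hcard : (Finset.Ico (K i) (K (i + 1))).card = s + 2 := by
          rw [Nat.card_Ico, hKsucc i]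
          omega
        have hb : ∀ j ∈ Finset.Ico (K i) (K (i + 1)), (j : ℝ) ^ (-a) ≤ (K i : ℝ) ^ (-a) := by
          intro j hj
          rw [Finset.mem_Ico] at hj
          have hji : (K i : ℝ) ≤ j := by exact_mod_cast hj.1
          have hpow : (K i : ℝ) ^ a ≤ (j : ℝ) ^ a := Real.rpow_le_rpow hk0.le hji ha0.le
          rw [Real.rpow_neg (by positivity), Real.rpow_neg (by positivity)]
          exact inv_anti₀ (Real.rpow_pos_of_pos hk0 a) hpow
        calc (∑ j ∈ Finset.Ico (K i) (K (i + 1)), (j : ℝ) ^ (-a))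
            ≤ (Finset.Ico (K i) (K (i + 1))).card • ((K i : ℝ) ^ (-a)) :=
              Finset.sum_le_card_nsmul _ _ _ hb
          _ = ((s : ℝ) + 2) * (K i : ℝ) ^ (-a) := by
              rw [hcard, nsmul_eq_mul]
              push_cast
              ring
      -- (2)
      have h5 : ((s : ℝ) + 2) * (K i : ℝ) ^ (-a) ≤ (K i : ℝ) ^ (-(1 - ε)) := by
        have hsb : ((s : ℝ) + 2) ≤ (K i : ℝ) ^ (ε / 2) := hKb (K i) (hKI0 i hi)
        calc ((s : ℝ) + 2) * (K i : ℝ) ^ (-a)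
            ≤ (K i : ℝ) ^ (ε / 2) * (K i : ℝ) ^ (-a) :=
              mul_le_mul_of_nonneg_right hsb (by positivity)
          _ = (K i : ℝ) ^ (-(1 - ε)) := by
              rw [← Real.rpow_add hk0]
              congr 1
              rw [hadef]
              ring
      -- (4) q^s lower bound
      have h6 : p θ * (K i : ℝ) ^ (-(1 - ε)) ≤ (p θ) ^ s := by
        have hslceil : (s : ℝ) < (1 - ε) * (Real.log (K i) / L) + 1 := by
          rw [hsdef, hsldef]
          apply Nat.ceil_lt_add_one
          have h1ε : 0 ≤ 1 - ε := by linarith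
          exact mul_nonneg h1ε (by positivity)
        have e1 : (p θ) ^ ((s : ℕ) : ℝ) ≥ (p θ) ^ ((1 - ε) * (Real.log (K i) / L) + 1) :=
          Real.rpow_le_rpow_of_exponent_ge hθpos hθlt.le hslceil.le
        have e2 : (p θ) ^ ((1 - ε) * (Real.log (K i) / L) + 1)
            = p θ * (K i : ℝ) ^ (-(1 - ε)) := by
          rw [Real.rpow_add hθpos, Real.rpow_one]
          rw [Real.rpow_def_of_pos hθpos, Real.rpow_def_of_pos hk0]
          rw [hlogL]
          rw [mul_comm]
          congr 2
          field_simp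
        rw [← Real.rpow_natCast (p θ) s]
        rw [← e2]
        exact e1
      calc Cr * ∑ j ∈ Finset.Ico (K i) (K (i + 1)), (j : ℝ) ^ (-a)
          ≤ Cr * (K i : ℝ) ^ (-(1 - ε)) :=
            mul_le_mul_of_nonneg_left (hSumB.trans h5) hCr0.le
        _ = (p θ0 * p θ1) * (p θ * (K i : ℝ) ^ (-(1 - ε))) := by rw [hCrdef]; ring
        _ ≤ (p θ0 * p θ1) * (p θ) ^ s := mul_le_mul_of_nonneg_left h6 (by positivity)
        _ = p θ0 * (p θ) ^ s * p θ1 := by ring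
    -- divergence
    have hdiv : (∑' i, ν (A i)) = ⊤ := by
      by_contra hfin
      have hnn : ∀ j : ℕ, 0 ≤ (j : ℝ) ^ (-a) := fun j => Real.rpow_nonneg (Nat.cast_nonneg j) _
      have hnotsum : ¬ Summable (fun j : ℕ => (j : ℝ) ^ (-a)) := by
        rw [Real.summable_nat_rpow]
        linarith
      have htendS : Tendsto (fun N => ∑ j ∈ Finset.range N, (j : ℝ) ^ (-a)) atTop atTop :=
        (not_summable_iff_tendsto_nat_atTop_of_nonneg hnn).1 hnotsum
      obtain ⟨R, hRdef⟩ : ∃ r : ℝ, r = (∑' i, ν (A i)).toReal + 1 := ⟨_, rfl⟩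
      obtain ⟨N0, hN0⟩ :=
        (htendS.eventually_ge_atTop (R / Cr + ∑ j ∈ Finset.range (K I0), (j : ℝ) ^ (-a))).exists
      have hKN : N0 ≤ K (I0 + N0) := le_trans (by omega) (hKi (I0 + N0))
      have htel : ∀ N : ℕ,
          ∑ i ∈ Finset.range N, (∑ j ∈ Finset.Ico (K (I0 + i)) (K (I0 + i + 1)), (j : ℝ) ^ (-a))
          = ∑ j ∈ Finset.Ico (K I0) (K (I0 + N)), (j : ℝ) ^ (-a) := by
        intro N
        induction N with
        | zero => simp
        | succ M ih =>
          rw [Finset.sum_range_succ, ih, show I0 + (M + 1) = I0 + M + 1 from rfl]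
          exact Finset.sum_Ico_consecutive _
            (hKmono.monotone (Nat.le_add_right I0 M))
            (hKmono.monotone (Nat.le_succ (I0 + M)))
      have hbig : R / Cr ≤ ∑ j ∈ Finset.Ico (K I0) (K (I0 + N0)), (j : ℝ) ^ (-a) := by
        have hsub : ∑ j ∈ Finset.range N0, (j : ℝ) ^ (-a)
            ≤ ∑ j ∈ Finset.range (K (I0 + N0)), (j : ℝ) ^ (-a) :=
          Finset.sum_le_sum_of_subset_of_nonneg (Finset.range_subset_range.2 hKN) fun j _ _ => hnn j
        have hsplit : (∑ j ∈ Finset.range (K I0), (j : ℝ) ^ (-a))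
            + ∑ j ∈ Finset.Ico (K I0) (K (I0 + N0)), (j : ℝ) ^ (-a)
            = ∑ j ∈ Finset.range (K (I0 + N0)), (j : ℝ) ^ (-a) := by
          rw [Finset.range_eq_Ico, Finset.range_eq_Ico]
          exact Finset.sum_Ico_consecutive _ (Nat.zero_le _)
            (hKmono.monotone (Nat.le_add_right I0 N0))
        linarith
      have h1 : ENNReal.ofReal (Cr * ∑ j ∈ Finset.Ico (K I0) (K (I0 + N0)), (j : ℝ) ^ (-a))
          ≤ ∑ i ∈ Finset.range N0, ν (A (I0 + i)) := by
        rw [← htel N0, Finset.mul_sum, ENNReal.ofReal_sum_of_nonneg]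
        · exact Finset.sum_le_sum fun i _ => hterm (I0 + i) (by omega)
        · intro i _
          have h0 : 0 ≤ ∑ j ∈ Finset.Ico (K (I0 + i)) (K (I0 + i + 1)), (j : ℝ) ^ (-a) :=
            Finset.sum_nonneg fun j _ => hnn j
          exact mul_nonneg hCr0.le h0
      have h2 : ∑ i ∈ Finset.range N0, ν (A (I0 + i)) ≤ ∑' i, ν (A i) := by
        have himg : ∑ i ∈ (Finset.range N0).image (fun i => I0 + i), ν (A i)
            = ∑ i ∈ Finset.range N0, ν (A (I0 + i)) :=
          Finset.sum_image (fun x _ y _ h => by omega)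
        rw [← himg]
        exact ENNReal.sum_le_tsum _
      have hchain : ENNReal.ofReal R ≤ ∑' i, ν (A i) := by
        have e0 : Cr * (R / Cr) = R := by
          rw [mul_comm]
          exact div_mul_cancel₀ R (ne_of_gt hCr0)
        calc ENNReal.ofReal R
            = ENNReal.ofReal (Cr * (R / Cr)) := by rw [e0]
          _ ≤ ENNReal.ofReal (Cr * ∑ j ∈ Finset.Ico (K I0) (K (I0 + N0)), (j : ℝ) ^ (-a)) :=
              ENNReal.ofReal_le_ofReal (mul_le_mul_of_nonneg_left hbig hCr0.le)
          _ ≤ ∑ i ∈ Finset.range N0, ν (A (I0 + i)) := h1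
          _ ≤ ∑' i, ν (A i) := h2
      have hle2 : R ≤ (∑' i, ν (A i)).toReal :=
        (ENNReal.ofReal_le_iff_le_toReal hfin).1 hchain
      rw [hRdef] at hle2
      linarith
    have hBC := ProbabilityTheory.measure_limsup_eq_one hAmeas hindep hdiv
    have hae : ∀ᵐ y ∂ν, y ∈ limsup A atTop := by
      have hms : MeasurableSet (limsup A atTop) := MeasurableSet.measurableSet_limsup hAmeas
      rw [ae_iff]
      have hcompl : {y : ℕ → ℕ | ¬ y ∈ limsup A atTop} = (limsup A atTop)ᶜ := rfl
      rw [hcompl, prob_compl_eq_zero_iff₀ hms.nullMeasurableSet]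
      exact hBC
    filter_upwards [hae] with y hy
    rw [mem_limsup_iff_frequently_mem] at hy
    have hfreq : ∃ᶠ k in atTop, ((1 - ε : ℝ) : EReal)
        ≤ (((runLenMod θ0 θ y k : ℝ) / (Real.log k / L) : ℝ) : EReal) := by
      rw [frequently_atTop] at hy ⊢
      intro N
      obtain ⟨i, hiN, hyA⟩ := hy N
      refine ⟨K i, le_trans (le_trans hiN (by omega)) (hKi i), ?_⟩
      simp only [hAdef, Set.mem_setOf_eq] at hyA
      have h2 := hK2 i
      have hy0 : y (K i - 1) = θ0 :=
        (hyA (K i - 1) (by simp only [hFdef, Finset.mem_Icc]; omega)).trans (hcl0 i)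
      have hyθ : ∀ t, t < sl (K i) → y (K i + t) = θ := fun t ht =>
        (hyA (K i + t) (by simp only [hFdef, Finset.mem_Icc]; omega)).trans (hclθ i t ht)
      have hy1 : y (K i + sl (K i)) = θ1 :=
        (hyA _ (by simp only [hFdef, Finset.mem_Icc]; omega)).trans (hcl1 i)
      have hrun : runLenMod θ0 θ y (K i) = sl (K i) := by
        rw [runLenMod, if_pos hy0]
        have hmem : sl (K i) ∈ {t | y (K i + t) ≠ θ} := by
          simp only [Set.mem_setOf_eq, hy1]
          exact hθ1θ
        have hle := Nat.sInf_le hmem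
        have hmem2 := Nat.sInf_mem (⟨_, hmem⟩ : {t | y (K i + t) ≠ θ}.Nonempty)
        by_contra hne
        have hlt : sInf {t | y (K i + t) ≠ θ} < sl (K i) := lt_of_le_of_ne hle hne
        exact hmem2 (hyθ _ hlt)
      have hk1 : (1 : ℝ) < (K i : ℝ) := by exact_mod_cast (by omega : 1 < K i)
      have hc : 0 < Real.log (K i) / L := div_pos (Real.log_pos hk1) hL
      rw [EReal.coe_le_coe_iff, hrun, le_div_iff₀ hc, hsldef]
      exact Nat.le_ceil _
    have hcoe : ((1 - 1 / ((n : ℝ) + 1) : ℝ) : EReal) = ((1 - ε : ℝ) : EReal) := by rw [hεdef]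
    rw [hcoe]
    exact le_limsup_of_frequently_le hfreq
  filter_upwards [ae_all_iff.2 keyU, ae_all_iff.2 keyL] with y hU hLo
  refine le_antisymm ?_ ?_
  · have htend : Tendsto (fun n : ℕ => ((1 + 1 / ((n : ℝ) + 1) : ℝ) : EReal)) atTop
        (nhds (1 : EReal)) := by
      rw [← EReal.coe_one, EReal.tendsto_coe]
      have h0 := tendsto_one_div_add_atTop_nhds_zero_nat (𝕜 := ℝ)
      simpa using tendsto_const_nhds.add h0
    exact ge_of_tendsto htend (Eventually.of_forall hU)
  · have htend : Tendsto (fun n : ℕ => ((1 - 1 / ((n : ℝ) + 1) : ℝ) : EReal)) atTop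
        (nhds (1 : EReal)) := by
      rw [← EReal.coe_one, EReal.tendsto_coe]
      have h0 := tendsto_one_div_add_atTop_nhds_zero_nat (𝕜 := ℝ)
      simpa using tendsto_const_nhds.sub h0
    exact le_of_tendsto htend (Eventually.of_forall hLo)


end BMpaper
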